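/- For every formula θ of the language L: θ is satisfiable in a TEM if and only if there exists a TEHS in which θ is satisfiable. -/

import Mathlib

namespace CMATEL

/-- A coalition is a nonempty set of agents. -/
def Coalition (Agt : Type) : Type := {A : Set Agt // A.Nonempty}

/-- The singleton coalition `{a}`. -/
def single {Agt : Type} (a : Agt) : Coalition Agt := ⟨{a}, Set.singleton_nonempty a⟩

/-- Formulas of the language L. -/
inductive Formula (Agt AP : Type) : Type where
  | atom : AP → Formula Agt AP
  | neg  : Formula Agt AP → Formula Agt AP
  | and  : Formula Agt AP → Formula Agt AP → Formula Agt AP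
  | next : Formula Agt AP → Formula Agt AP
  | untl : Formula Agt AP → Formula Agt AP → Formula Agt AP
  | dk   : Coalition Agt → Formula Agt AP → Formula Agt AP
  | ck   : Coalition Agt → Formula Agt AP → Formula Agt AP

variable {Agt AP : Type}

def Formula.imp (φ ψ : Formula Agt AP) : Formula Agt AP :=
  Formula.neg (Formula.and φ (Formula.neg ψ))
def Formula.or (φ ψ : Formula Agt AP) : Formula Agt AP :=
  Formula.neg (Formula.and (Formula.neg φ) (Formula.neg ψ))
def Formula.iff (φ ψ : Formula Agt AP) : Formula Agt AP :=
  Formula.and (φ.imp ψ) (ψ.imp φ)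

/-- The set of subformulas of a formula. -/
def Formula.subf : Formula Agt AP → Set (Formula Agt AP)
  | .atom p   => {Formula.atom p}
  | .neg φ    => insert (Formula.neg φ) φ.subf
  | .and φ ψ  => insert (Formula.and φ ψ) (φ.subf ∪ ψ.subf)
  | .next φ   => insert (Formula.next φ) φ.subf
  | .untl φ ψ => insert (Formula.untl φ ψ) (φ.subf ∪ ψ.subf)
  | .dk A φ   => insert (Formula.dk A φ) φ.subf
  | .ck A φ   => insert (Formula.ck A φ) φ.subf

/-- A temporal-epistemic system (TES): a nonempty set of states, a nonempty set
of runs, and, for every coalition `A`, relations `R^D_A` and `R^C_A` on points,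
where `R^C_A` is the reflexive transitive closure of the union of `R^D_{A'}`
over coalitions `A' ⊆ A`. -/
structure TES (Agt : Type) where
  State : Type
  stateNE : Nonempty State
  runs : Set (ℕ → State)
  runsNE : runs.Nonempty
  RD : Coalition Agt → ↥runs × ℕ → ↥runs × ℕ → Prop
  RC : Coalition Agt → ↥runs × ℕ → ↥runs × ℕ → Prop
  hRC : ∀ A : Coalition Agt, RC A =
    Relation.ReflTransGen (fun x y => ∃ A' : Coalition Agt, A'.1 ⊆ A.1 ∧ RD A' x y)

abbrev TES.Point (G : TES Agt) : Type := ↥G.runs × ℕ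

/-- Synchrony: epistemically related points have the same time component. -/
def TES.Synchronous (G : TES Agt) : Prop :=
  ∀ (A : Coalition Agt) (x y : G.Point), G.RD A x y → x.2 = y.2

/-- A TEF: each `R^D_A` is an equivalence, and `R^D_A = ⋂_{a ∈ A} R^D_{{a}}`. -/
def IsTEF (G : TES Agt) : Prop :=
  (∀ A : Coalition Agt, Equivalence (G.RD A)) ∧
  (∀ (A : Coalition Agt) (x y : G.Point), G.RD A x y ↔ ∀ a ∈ A.1, G.RD (single a) x y)

/-- A pseudo-TEF: each `R^D_A` is an equivalence, and `R^D_A ⊆ R^D_B` for `B ⊆ A`. -/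
def IsPseudoTEF (G : TES Agt) : Prop :=
  (∀ A : Coalition Agt, Equivalence (G.RD A)) ∧
  (∀ (A B : Coalition Agt), B.1 ⊆ A.1 → ∀ x y : G.Point, G.RD A x y → G.RD B x y)

/-- Satisfaction at points `R × ℕ`, given the epistemic relations and a labeling. -/
def Sat {R : Type} (RD RC : Coalition Agt → R × ℕ → R × ℕ → Prop)
    (lab : R × ℕ → Set AP) : R × ℕ → Formula Agt AP → Prop
  | x, .atom p => p ∈ lab x
  | x, .neg φ => ¬ Sat RD RC lab x φ
  | x, .and φ ψ => Sat RD RC lab x φ ∧ Sat RD RC lab x ψ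
  | x, .next φ => Sat RD RC lab (x.1, x.2 + 1) φ
  | x, .untl φ ψ => ∃ i, x.2 ≤ i ∧ Sat RD RC lab (x.1, i) ψ ∧
      ∀ j, x.2 ≤ j → j < i → Sat RD RC lab (x.1, j) φ
  | x, .dk A φ => ∀ y, RD A x y → Sat RD RC lab y φ
  | x, .ck A φ => ∀ y, RC A x y → Sat RD RC lab y φ

/-- A temporal-epistemic model: a TEF together with a labeling of points. -/
structure TEM (Agt AP : Type) where
  G : TES Agt
  lab : G.Point → Set AP
  isTEF : IsTEF G

def TEM.sat (M : TEM Agt AP) : M.G.Point → Formula Agt AP → Prop :=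
  Sat M.G.RD M.G.RC M.lab

/-- A pseudo temporal-epistemic model: a pseudo-TEF together with a labeling. -/
structure PseudoTEM (Agt AP : Type) where
  G : TES Agt
  lab : G.Point → Set AP
  isPTEF : IsPseudoTEF G

def PseudoTEM.sat (M : PseudoTEM Agt AP) : M.G.Point → Formula Agt AP → Prop :=
  Sat M.G.RD M.G.RC M.lab

/-- `A`-reachability: the reflexive transitive closure of single-agent steps
`R^D_{{a}}`, `a ∈ A`. -/
def AReach (G : TES Agt) (A : Coalition Agt) : G.Point → G.Point → Prop :=
  Relation.ReflTransGen (fun x y => ∃ a ∈ A.1, G.RD (single a) x y)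

/-- Fully expanded sets of formulas. -/
def FullyExpanded (Δ : Set (Formula Agt AP)) : Prop :=
  (∀ φ : Formula Agt AP, Formula.neg (Formula.neg φ) ∈ Δ → φ ∈ Δ) ∧
  (∀ φ ψ : Formula Agt AP, Formula.and φ ψ ∈ Δ → φ ∈ Δ ∧ ψ ∈ Δ) ∧
  (∀ φ ψ : Formula Agt AP, Formula.neg (Formula.and φ ψ) ∈ Δ →
      Formula.neg φ ∈ Δ ∨ Formula.neg ψ ∈ Δ) ∧
  (∀ φ : Formula Agt AP, Formula.neg (Formula.next φ) ∈ Δ →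
      Formula.next (Formula.neg φ) ∈ Δ) ∧
  (∀ φ ψ : Formula Agt AP, Formula.untl φ ψ ∈ Δ →
      ψ ∈ Δ ∨ (φ ∈ Δ ∧ Formula.next (Formula.untl φ ψ) ∈ Δ)) ∧
  (∀ φ ψ : Formula Agt AP, Formula.neg (Formula.untl φ ψ) ∈ Δ →
      (Formula.neg ψ ∈ Δ ∧ Formula.neg φ ∈ Δ) ∨
      (Formula.neg ψ ∈ Δ ∧ Formula.neg (Formula.next (Formula.untl φ ψ)) ∈ Δ)) ∧
  (∀ (A A' : Coalition Agt) (φ : Formula Agt AP), Formula.dk A φ ∈ Δ →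
      A.1 ⊆ A'.1 → Formula.dk A' φ ∈ Δ) ∧
  (∀ (A : Coalition Agt) (φ : Formula Agt AP), Formula.dk A φ ∈ Δ → φ ∈ Δ) ∧
  (∀ (A : Coalition Agt) (φ : Formula Agt AP), Formula.ck A φ ∈ Δ →
      ∀ a ∈ A.1, Formula.dk (single a) (Formula.and φ (Formula.ck A φ)) ∈ Δ) ∧
  (∀ (A : Coalition Agt) (φ : Formula Agt AP), Formula.neg (Formula.ck A φ) ∈ Δ →
      ∃ a ∈ A.1, Formula.neg (Formula.dk (single a) (Formula.and φ (Formula.ck A φ))) ∈ Δ) ∧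
  (∀ ψ ∈ Δ, ∀ (A : Coalition Agt) (φ : Formula Agt AP),
      Formula.dk A φ ∈ ψ.subf → Formula.dk A φ ∈ Δ ∨ Formula.neg (Formula.dk A φ) ∈ Δ)

/-- Hintikka-structure conditions (H1)–(H7) for a labeling `H` on a TES. -/
def IsHintikka (G : TES Agt) (H : G.Point → Set (Formula Agt AP)) : Prop :=
  (∀ (x : G.Point) (φ : Formula Agt AP), Formula.neg φ ∈ H x → φ ∉ H x) ∧
  (∀ x : G.Point, FullyExpanded (H x)) ∧
  (∀ (r : ↥G.runs) (n : ℕ) (φ : Formula Agt AP),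
      Formula.next φ ∈ H (r, n) → φ ∈ H (r, n + 1)) ∧
  (∀ (r : ↥G.runs) (n : ℕ) (φ ψ : Formula Agt AP), Formula.untl φ ψ ∈ H (r, n) →
      ∃ i, n ≤ i ∧ ψ ∈ H (r, i) ∧ ∀ j, n ≤ j → j < i → φ ∈ H (r, j)) ∧
  (∀ (x : G.Point) (A : Coalition Agt) (φ : Formula Agt AP),
      Formula.neg (Formula.dk A φ) ∈ H x →
      ∃ y : G.Point, G.RD A x y ∧ Formula.neg φ ∈ H y) ∧
  (∀ (x y : G.Point) (A : Coalition Agt), G.RD A x y →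
      ∀ (A' : Coalition Agt), A'.1 ⊆ A.1 → ∀ φ : Formula Agt AP,
        (Formula.dk A' φ ∈ H x ↔ Formula.dk A' φ ∈ H y)) ∧
  (∀ (x : G.Point) (A : Coalition Agt) (φ : Formula Agt AP),
      Formula.neg (Formula.ck A φ) ∈ H x →
      ∃ y : G.Point, G.RC A x y ∧ Formula.neg φ ∈ H y)

/-- A temporal-epistemic Hintikka structure. -/
structure TEHS (Agt AP : Type) where
  G : TES Agt
  H : G.Point → Set (Formula Agt AP)
  isH : IsHintikka G H

def TEHS.Synchronous (Hs : TEHS Agt AP) : Prop := Hs.G.Synchronous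

/-- Derived relation `R'^D_A`: the reflexive, symmetric and transitive closure of
the union of `R^D_B` over coalitions `B ⊇ A`. -/
def derivedRD (G : TES Agt) (A : Coalition Agt) : G.Point → G.Point → Prop :=
  Relation.EqvGen (fun x y => ∃ B : Coalition Agt, A.1 ⊆ B.1 ∧ G.RD B x y)

/-- Derived relation `R'^C_A`: the transitive closure of the union of
`R'^D_{{a}}` over `a ∈ A`. -/
def derivedRC (G : TES Agt) (A : Coalition Agt) : G.Point → G.Point → Prop :=
  Relation.TransGen (fun x y => ∃ a ∈ A.1, derivedRD G (single a) x y)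

/-- Derived labeling `L(r,n) = H(r,n) ∩ AP`. -/
def derivedLab (Hs : TEHS Agt AP) : Hs.G.Point → Set AP :=
  fun x => {p | Formula.atom p ∈ Hs.H x}

/-- Patently inconsistent set: contains a formula together with its negation. -/
def PatentlyInconsistent (Δ : Set (Formula Agt AP)) : Prop :=
  ∃ φ : Formula Agt AP, φ ∈ Δ ∧ Formula.neg φ ∈ Δ

/-- Minimal fully expanded extension. -/
def MinimalFEE (Γ Δ : Set (Formula Agt AP)) : Prop :=
  FullyExpanded Δ ∧ Γ ⊆ Δ ∧
  ¬ ∃ Δ' : Set (Formula Agt AP), FullyExpanded Δ' ∧ Γ ⊆ Δ' ∧ Δ' ⊂ Δ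

/-- A maximal path from `x` to `y`: consecutive points are related by `R^D_{A_i}`
and by no `R^D_B` for a strictly larger coalition `B`. -/
def IsMaximalPath (G : TES Agt) (m : ℕ) (pts : ℕ → G.Point) (cs : ℕ → Coalition Agt)
    (x y : G.Point) : Prop :=
  pts 0 = x ∧ pts m = y ∧ ∀ i < m,
    G.RD (cs i) (pts i) (pts (i + 1)) ∧
    ∀ B : Coalition Agt, (cs i).1 ⊂ B.1 → ¬ G.RD B (pts i) (pts (i + 1))

/-- A maximal path equals its reduction iff no two consecutive points lie on the
same run and no two consecutive coalition labels coincide. -/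
def IsReducedPath (G : TES Agt) (m : ℕ) (pts : ℕ → G.Point) (cs : ℕ → Coalition Agt) : Prop :=
  (∀ i < m, (pts i).1 ≠ (pts (i + 1)).1) ∧ (∀ i, i + 1 < m → cs i ≠ cs (i + 1))

/-- Forest-likeness: between any two points there is at most one reduced maximal path. -/
def ForestLike (G : TES Agt) : Prop :=
  ∀ (x y : G.Point) (m₁ : ℕ) (pts₁ : ℕ → G.Point) (cs₁ : ℕ → Coalition Agt)
    (m₂ : ℕ) (pts₂ : ℕ → G.Point) (cs₂ : ℕ → Coalition Agt),
    IsMaximalPath G m₁ pts₁ cs₁ x y → IsReducedPath G m₁ pts₁ cs₁ →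
    IsMaximalPath G m₂ pts₂ cs₂ x y → IsReducedPath G m₂ pts₂ cs₂ →
    m₁ = m₂ ∧ (∀ i ≤ m₁, pts₁ i = pts₂ i) ∧ (∀ i < m₁, cs₁ i = cs₂ i)

/-- Finite conjunction of a nonempty list of formulas. -/
def bigAnd : Formula Agt AP → List (Formula Agt AP) → Formula Agt AP
  | φ, [] => φ
  | φ, ψ :: l => Formula.and φ (bigAnd ψ l)

/-- `D_{{a}}(φ ∧ C_A φ)`. -/
def dform (A : Coalition Agt) (φ : Formula Agt AP) (a : Agt) : Formula Agt AP :=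
  Formula.dk (single a) (Formula.and φ (Formula.ck A φ))

section Statement12Aux

open Relation

variable {Agt AP : Type}

lemma mem_single_iff {a b : Agt} : b ∈ (single a).1 ↔ b = a := Iff.rfl

lemma tem_rdMono (M : TEM Agt AP) {A A' : Coalition Agt} (h : A.1 ⊆ A'.1) :
    ∀ x y : M.G.Point, M.G.RD A' x y → M.G.RD A x y := fun x y hxy =>
  (M.isTEF.2 A x y).2 fun a ha => (M.isTEF.2 A' x y).1 hxy a (h ha)

lemma tem_truth_hintikka (M : TEM Agt AP) :
    IsHintikka M.G fun x => {φ | M.sat x φ} := by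
  have hE := M.isTEF.1
  have hsingle : ∀ (A : Coalition Agt) (a : Agt), a ∈ A.1 →
      ∀ x y : M.G.Point, M.G.RD (single a) x y → M.G.RC A x y := by
    intro A a ha x y hxy
    rw [M.G.hRC]
    exact ReflTransGen.single ⟨single a, fun b hb => (mem_single_iff.mp hb) ▸ ha, hxy⟩
  refine ⟨?_, ?_, ?_, ?_, ?_, ?_, ?_⟩
  · -- H1
    intro x φ h hφ
    exact h hφ
  · -- H2
    intro x
    refine ⟨?_, ?_, ?_, ?_, ?_, ?_, ?_, ?_, ?_, ?_, ?_⟩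
    · intro φ h
      exact not_not.mp h
    · intro φ ψ h
      exact h
    · intro φ ψ h
      by_cases hφ : M.sat x φ
      · exact Or.inr fun hψ => h ⟨hφ, hψ⟩
      · exact Or.inl hφ
    · intro φ h
      exact h
    · intro φ ψ h
      obtain ⟨i, hi, hψ, hφ⟩ := h
      by_cases h0 : M.sat (x.1, x.2) ψ
      · exact Or.inl h0
      · have hne : x.2 < i := lt_of_le_of_ne hi fun e => h0 (by rw [e]; exact hψ)
        exact Or.inr ⟨hφ x.2 le_rfl hne,
          ⟨i, hne, hψ, fun j hj hji => hφ j (Nat.le_of_succ_le hj) hji⟩⟩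
    · intro φ ψ h
      have hψ : ¬ M.sat (x.1, x.2) ψ := fun hs =>
        h ⟨x.2, le_rfl, hs, fun j h1 h2 => absurd h2 (not_lt.2 h1)⟩
      by_cases hφ : M.sat (x.1, x.2) φ
      · refine Or.inr ⟨hψ, ?_⟩
        intro hs
        obtain ⟨i, hi, hsψ, hsφ⟩ := hs
        refine h ⟨i, Nat.le_of_succ_le hi, hsψ, fun j hj hji => ?_⟩
        rcases Nat.eq_or_lt_of_le hj with he | hl
        · rw [← he]; exact hφ
        · exact hsφ j hl hji
      · exact Or.inl ⟨hψ, hφ⟩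
    · intro A A' φ h hsub y hy
      exact h y (tem_rdMono M hsub x y hy)
    · intro A φ h
      exact h x ((hE A).refl x)
    · intro A φ h a ha y hy
      have hxy : M.G.RC A x y := hsingle A a ha x y hy
      refine ⟨h y hxy, fun z hz => h z ?_⟩
      rw [M.G.hRC] at hxy hz ⊢
      exact hxy.trans hz
    · intro A φ h
      obtain ⟨a₀, ha₀⟩ := A.2
      exact ⟨a₀, ha₀, fun hd => h (hd x ((hE (single a₀)).refl x)).2⟩
    · intro ψ hψ A φ hsub
      by_cases hd : M.sat x (Formula.dk A φ)
      · exact Or.inl hd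
      · exact Or.inr hd
  · -- H3
    intro r n φ h
    exact h
  · -- H4
    intro r n φ ψ h
    exact h
  · -- H5
    intro x A φ h
    by_contra hc
    push_neg at hc
    exact h fun y hy => not_not.mp fun hn => hc y hy (fun hs => hn hs)
  · -- H6
    intro x y A hxy A' hsub φ
    have hxy' : M.G.RD A' x y := tem_rdMono M hsub x y hxy
    constructor
    · intro h z hz
      exact h z ((hE A').trans hxy' hz)
    · intro h z hz
      exact h z ((hE A').trans ((hE A').symm hxy') hz)
  · -- H7
    intro x A φ h
    by_contra hc
    push_neg at hc
    exact h fun y hy => not_not.mp fun hn => hc y hy (fun hs => hn hs)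

/-! ### Unravelling a pseudo-model into a genuine TEM -/

variable (G : TES Agt)

/-- Nodes of the unravelled forest: a root run together with a list of edges
(label, parent time, child point), most recent first. -/
abbrev UNode := ↥G.runs × List (Coalition Agt × ℕ × G.Point)

/-- The current run of a node. -/
def ucur : UNode G → ↥G.runs
  | (r, []) => r
  | (_, (_, _, y) :: _) => y.1

/-- The point of `G` corresponding to a node-time pair. -/
def gpt : UNode G × ℕ → G.Point := fun x => (ucur G x.1, x.2)

/-- `UStep a p x`: `x` is a child of `p` via an edge whose label contains `a`. -/
def UStep (a : Agt) (p x : UNode G × ℕ) : Prop :=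
  ∃ (B : Coalition Agt) (z : G.Point), a ∈ B.1 ∧ G.RD B (gpt G p) z ∧
    x.1 = (p.1.1, (B, p.2, z) :: p.1.2) ∧ x.2 = z.2

lemma ustep_gpt {a : Agt} {p x : UNode G × ℕ} (h : UStep G a p x) :
    ∃ B : Coalition Agt, a ∈ B.1 ∧ G.RD B (gpt G p) (gpt G x) := by
  obtain ⟨B, z, ha, hr, hx1, hx2⟩ := h
  refine ⟨B, ha, ?_⟩
  have hz : gpt G x = z := by
    show (ucur G x.1, x.2) = z
    rw [hx1, hx2]
    rfl
  rw [hz]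
  exact hr

lemma ustep_det {a b : Agt} {p q x : UNode G × ℕ} (hp : UStep G a p x)
    (hq : UStep G b q x) : p = q := by
  obtain ⟨B, z, _, _, hx1, hx2⟩ := hp
  obtain ⟨B', z', _, _, hx1', hx2'⟩ := hq
  rw [hx1] at hx1'
  obtain ⟨⟨rp, lp⟩, tp⟩ := p
  obtain ⟨⟨rq, lq⟩, tq⟩ := q
  simp only [Prod.mk.injEq, List.cons.injEq] at hx1'
  obtain ⟨e1, ⟨e2, e3, e4⟩, e5⟩ := hx1'
  rw [e1, e5, e3]

/-- Label agreement: if every `a ∈ A` steps from `p` to `x`, the (unique) edge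
label contains all of `A`, giving a pseudo `R^D_A` link. -/
lemma ustep_all (hMono : ∀ (A B : Coalition Agt), B.1 ⊆ A.1 →
      ∀ x y : G.Point, G.RD A x y → G.RD B x y)
    {A : Coalition Agt} {p x : UNode G × ℕ}
    (hall : ∀ a ∈ A.1, UStep G a p x) : G.RD A (gpt G p) (gpt G x) := by
  obtain ⟨a₀, ha₀⟩ := A.2
  obtain ⟨B, z, hB0, hr, hx1, hx2⟩ := hall a₀ ha₀
  have hz : gpt G x = z := by
    show (ucur G x.1, x.2) = z
    rw [hx1, hx2]; rfl
  have hsub : A.1 ⊆ B.1 := by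
    intro a ha
    obtain ⟨B', z', hB', hr', hx1', hx2'⟩ := hall a ha
    rw [hx1] at hx1'
    simp only [Prod.mk.injEq, List.cons.injEq] at hx1'
    rw [hx1'.2.1.1]
    exact hB'
  rw [hz]
  exact hMono B A hsub _ _ hr

def uhgt : UNode G × ℕ → ℕ := fun x => x.1.2.length

lemma ustep_hgt {a : Agt} {p x : UNode G × ℕ} (h : UStep G a p x) :
    uhgt G x = uhgt G p + 1 := by
  obtain ⟨B, z, _, _, hx1, _⟩ := h
  show x.1.2.length = p.1.2.length + 1
  rw [hx1]
  rfl

/-- Climbing relation: the reflexive transitive closure of "step to parent". -/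
def UClimb (R : UNode G × ℕ → UNode G × ℕ → Prop) : UNode G × ℕ → UNode G × ℕ → Prop :=
  ReflTransGen fun x p => R p x

lemma uclimb_lt {x y : UNode G × ℕ}
    (h : ReflTransGen (fun u p => ∃ a, UStep G a p u) x y) :
    y = x ∨ uhgt G y < uhgt G x := by
  induction h with
  | refl => exact Or.inl rfl
  | tail _ hbc ih =>
    obtain ⟨a, hs⟩ := hbc
    have hh := ustep_hgt G hs
    rcases ih with rfl | hlt
    · exact Or.inr (by omega)
    · exact Or.inr (by omega)

lemma uclimb_antisymm {x y : UNode G × ℕ}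
    (h1 : ReflTransGen (fun u p => ∃ a, UStep G a p u) x y)
    (h2 : ReflTransGen (fun u p => ∃ a, UStep G a p u) y x) : x = y := by
  rcases uclimb_lt G h1 with rfl | hlt1
  · rfl
  rcases uclimb_lt G h2 with rfl | hlt2
  · rfl
  omega

/-- In a functional graph, two ancestors of the same point are comparable. -/
lemma rtg_comparable {α : Type*} {R : α → α → Prop}
    (hdet : ∀ x p q, R x p → R x q → p = q) {y z₁ z₂ : α}
    (h1 : ReflTransGen R y z₁) (h2 : ReflTransGen R y z₂) :
    ReflTransGen R z₁ z₂ ∨ ReflTransGen R z₂ z₁ := by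
  revert h2
  induction h1 using ReflTransGen.head_induction_on with
  | refl => exact fun h2 => Or.inl h2
  | head hac hcz₁ ih =>
    intro h2
    rcases h2.cases_head with rfl | ⟨c', hac', hc'z₂⟩
    · exact Or.inr (ReflTransGen.head hac hcz₁)
    · exact ih ((hdet _ _ _ hac hac') ▸ hc'z₂)

/-- `EqvGen` of steps is the "common ancestor" relation. -/
lemma estar_iff_meet {a : Agt} {x y : UNode G × ℕ} :
    EqvGen (UStep G a) x y ↔
      ∃ z, ReflTransGen (fun u p => UStep G a p u) x z ∧
           ReflTransGen (fun u p => UStep G a p u) y z := by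
  have hdet : ∀ (u p q : UNode G × ℕ),
      (fun u p => UStep G a p u) u p → (fun u p => UStep G a p u) u q → p = q :=
    fun u p q hp hq => ustep_det G hp hq
  constructor
  · intro h
    induction h with
    | rel u v huv => exact ⟨u, ReflTransGen.refl, ReflTransGen.single huv⟩
    | refl u => exact ⟨u, ReflTransGen.refl, ReflTransGen.refl⟩
    | symm u v _ ih => obtain ⟨z, h1, h2⟩ := ih; exact ⟨z, h2, h1⟩
    | trans u v w _ _ ih1 ih2 =>
      obtain ⟨z1, hu, hv⟩ := ih1
      obtain ⟨z2, hv', hw⟩ := ih2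
      rcases rtg_comparable hdet hv hv' with h | h
      · exact ⟨z2, hu.trans h, hw⟩
      · exact ⟨z1, hu, hw.trans h⟩
  · rintro ⟨z, h1, h2⟩
    have up : ∀ {u v : UNode G × ℕ},
        ReflTransGen (fun u p => UStep G a p u) u v → EqvGen (UStep G a) u v := by
      intro u v h
      induction h with
      | refl => exact EqvGen.refl _
      | tail _ hbc ih => exact EqvGen.trans _ _ _ ih (EqvGen.symm _ _ (EqvGen.rel _ _ hbc))
    exact EqvGen.trans _ _ _ (up h1) (EqvGen.symm _ _ (up h2))

/-- The common-ancestor meet for a whole coalition: if for every `a ∈ A` the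
points `x` and `y` have a common `a`-ancestor, then they have a common ancestor
reachable by steps all of whose labels contain all of `A`. -/
lemma umeet (A : Coalition Agt) :
    ∀ (N : ℕ) (x y : UNode G × ℕ), uhgt G x + uhgt G y ≤ N →
    (∀ a ∈ A.1, ∃ z, ReflTransGen (fun u p => UStep G a p u) x z ∧
        ReflTransGen (fun u p => UStep G a p u) y z) →
    ∃ z, ReflTransGen (fun u p => ∀ a ∈ A.1, UStep G a p u) x z ∧
         ReflTransGen (fun u p => ∀ a ∈ A.1, UStep G a p u) y z := by
  intro N
  induction N using Nat.strong_induction_on with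
  | _ N ih =>
    intro x y hN h
    by_cases hxy : x = y
    · exact ⟨x, ReflTransGen.refl, hxy ▸ ReflTransGen.refl⟩
    obtain ⟨a₀, ha₀⟩ := A.2
    have toAny : ∀ {a : Agt} {u v : UNode G × ℕ},
        ReflTransGen (fun u p => UStep G a p u) u v →
        ReflTransGen (fun u p => ∃ b, UStep G b p u) u v :=
      fun {a u v} h => ReflTransGen.mono (fun _ _ hs => ⟨a, hs⟩) _ _ h
    by_cases h2 : ∃ a ∈ A.1, ReflTransGen (fun u p => UStep G a p u) y x
    · -- recurse on y's side
      have hz : ∀ a ∈ A.1, ∃ p z, UStep G a p y ∧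
          ReflTransGen (fun u p => UStep G a p u) p z ∧
          ReflTransGen (fun u p => UStep G a p u) x z := by
        intro a ha
        obtain ⟨z, hxz, hyz⟩ := h a ha
        rcases hyz.cases_head with rfl | ⟨p, hp, hrest⟩
        · exfalso
          obtain ⟨b, hb, hby⟩ := h2
          exact hxy (uclimb_antisymm G (toAny hxz) (toAny hby))
        · exact ⟨p, z, hp, hrest, hxz⟩
      obtain ⟨p₀, z₀, hp₀, hr₀, hx₀⟩ := hz a₀ ha₀
      have hall : ∀ a ∈ A.1, UStep G a p₀ y := by
        intro a ha
        obtain ⟨p, z, hp, _, _⟩ := hz a ha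
        rwa [ustep_det G hp hp₀] at hp
      have hmeets : ∀ a ∈ A.1, ∃ z, ReflTransGen (fun u p => UStep G a p u) x z ∧
          ReflTransGen (fun u p => UStep G a p u) p₀ z := by
        intro a ha
        obtain ⟨p, z, hp, hrest, hxz⟩ := hz a ha
        have hpp : p = p₀ := ustep_det G hp hp₀
        rw [hpp] at hrest
        exact ⟨z, hxz, hrest⟩
      have hhy : uhgt G y = uhgt G p₀ + 1 := ustep_hgt G hp₀
      have hlt : uhgt G x + uhgt G p₀ < N := by omega
      obtain ⟨z, hxz, hpz⟩ := ih _ hlt x p₀ le_rfl hmeets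
      exact ⟨z, hxz, ReflTransGen.head hall hpz⟩
    · -- no climb from y to x; recurse on x's side
      push_neg at h2
      have hz : ∀ a ∈ A.1, ∃ p z, UStep G a p x ∧
          ReflTransGen (fun u p => UStep G a p u) p z ∧
          ReflTransGen (fun u p => UStep G a p u) y z := by
        intro a ha
        obtain ⟨z, hxz, hyz⟩ := h a ha
        rcases hxz.cases_head with rfl | ⟨p, hp, hrest⟩
        · exact absurd hyz (h2 a ha)
        · exact ⟨p, z, hp, hrest, hyz⟩
      obtain ⟨p₀, z₀, hp₀, hr₀, hy₀⟩ := hz a₀ ha₀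
      have hall : ∀ a ∈ A.1, UStep G a p₀ x := by
        intro a ha
        obtain ⟨p, z, hp, _, _⟩ := hz a ha
        rwa [ustep_det G hp hp₀] at hp
      have hmeets : ∀ a ∈ A.1, ∃ z, ReflTransGen (fun u p => UStep G a p u) p₀ z ∧
          ReflTransGen (fun u p => UStep G a p u) y z := by
        intro a ha
        obtain ⟨p, z, hp, hrest, hyz⟩ := hz a ha
        have hpp : p = p₀ := ustep_det G hp hp₀
        rw [hpp] at hrest
        exact ⟨z, hrest, hyz⟩
      have hhx : uhgt G x = uhgt G p₀ + 1 := ustep_hgt G hp₀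
      have hlt : uhgt G p₀ + uhgt G y < N := by omega
      obtain ⟨z, hpz, hyz⟩ := ih _ hlt p₀ y le_rfl hmeets
      exact ⟨z, ReflTransGen.head hall hpz, hyz⟩

/-- KEY LEMMA: in a pseudo-model, if `x` and `y` are `EqvGen (UStep a)`-related
for every `a ∈ A`, then their underlying points are `R^D_A`-related. -/
lemma umeet_rd (hEq : ∀ A : Coalition Agt, Equivalence (G.RD A))
    (hMono : ∀ (A B : Coalition Agt), B.1 ⊆ A.1 →
      ∀ x y : G.Point, G.RD A x y → G.RD B x y)
    (A : Coalition Agt) {x y : UNode G × ℕ}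
    (h : ∀ a ∈ A.1, EqvGen (UStep G a) x y) :
    G.RD A (gpt G x) (gpt G y) := by
  have h' : ∀ a ∈ A.1, ∃ z, ReflTransGen (fun u p => UStep G a p u) x z ∧
      ReflTransGen (fun u p => UStep G a p u) y z :=
    fun a ha => (estar_iff_meet G).mp (h a ha)
  obtain ⟨z, hxz, hyz⟩ := umeet G A (uhgt G x + uhgt G y) x y le_rfl h'
  have down : ∀ {u v : UNode G × ℕ},
      ReflTransGen (fun u p => ∀ a ∈ A.1, UStep G a p u) u v →
      G.RD A (gpt G u) (gpt G v) := by
    intro u v h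
    induction h with
    | refl => exact (hEq A).refl _
    | tail _ hbc ih =>
      exact (hEq A).trans ih ((hEq A).symm (ustep_all G hMono hbc))
  exact (hEq A).trans (down hxz) ((hEq A).symm (down hyz))

/-! ### The unravelled TEM of a pseudo-model -/

variable {G}

/-- The unravelled temporal-epistemic system of a pseudo-model. -/
def unrTES (P : PseudoTEM Agt AP) : TES Agt where
  State := UNode P.G
  stateNE := ⟨(⟨P.G.runsNE.choose, P.G.runsNE.choose_spec⟩, [])⟩
  runs := Set.range fun h : UNode P.G => Function.const ℕ h
  runsNE := ⟨Function.const ℕ ((⟨P.G.runsNE.choose, P.G.runsNE.choose_spec⟩, []) : UNode P.G),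
    Set.mem_range_self _⟩
  RD := fun A x y => ∀ a ∈ A.1, EqvGen (UStep P.G a) (x.1.1 0, x.2) (y.1.1 0, y.2)
  RC := fun A => ReflTransGen fun x y => ∃ A' : Coalition Agt, A'.1 ⊆ A.1 ∧
    ∀ a ∈ A'.1, EqvGen (UStep P.G a) (x.1.1 0, x.2) (y.1.1 0, y.2)
  hRC := fun _ => rfl

/-- The run of the unravelled system determined by a node. -/
def uerun (P : PseudoTEM Agt AP) (h : UNode P.G) : ↥(unrTES P).runs :=
  ⟨Function.const ℕ h, ⟨h, rfl⟩⟩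

/-- The unravelled temporal-epistemic model. -/
def unrTEM (P : PseudoTEM Agt AP) : TEM Agt AP where
  G := unrTES P
  lab := fun x => P.lab (gpt P.G (x.1.1 0, x.2))
  isTEF := by
    constructor
    · intro A
      refine ⟨fun x a ha => EqvGen.refl _, fun h a ha => EqvGen.symm _ _ (h a ha),
        fun h1 h2 a ha => EqvGen.trans _ _ _ (h1 a ha) (h2 a ha)⟩
    · intro A x y
      constructor
      · intro h a ha b hb
        rw [mem_single_iff.mp hb]
        exact h a ha
      · intro h a ha
        exact h a ha a rfl

/-- Truth lemma for the unravelled model. -/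
lemma unr_truth (P : PseudoTEM Agt AP) (φ : Formula Agt AP) :
    ∀ x : (unrTES P).Point,
      (unrTEM P).sat x φ ↔ P.sat (gpt P.G (x.1.1 0, x.2)) φ := by
  induction φ with
  | atom p =>
    intro x
    exact Iff.rfl
  | neg φ ih =>
    intro x
    exact not_congr (ih x)
  | and φ ψ ihφ ihψ =>
    intro x
    exact and_congr (ihφ x) (ihψ x)
  | next φ ih =>
    intro x
    exact ih (x.1, x.2 + 1)
  | untl φ ψ ihφ ihψ =>
    intro x
    exact exists_congr fun i => and_congr Iff.rfl (and_congr (ihψ (x.1, i))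
      (forall_congr' fun j => imp_congr Iff.rfl (imp_congr Iff.rfl (ihφ (x.1, j)))))
  | dk A φ ih =>
    intro x
    constructor
    · intro h z hz
      have hstep : ∀ a ∈ A.1, UStep P.G a (x.1.1 0, x.2)
          (((x.1.1 0).1, (A, x.2, z) :: (x.1.1 0).2), z.2) :=
        fun a ha => ⟨A, z, ha, hz, rfl, rfl⟩
      have hrd : (unrTES P).RD A x
          (uerun P ((x.1.1 0).1, (A, x.2, z) :: (x.1.1 0).2), z.2) :=
        fun a ha => EqvGen.rel _ _ (hstep a ha)
      exact (ih (uerun P ((x.1.1 0).1, (A, x.2, z) :: (x.1.1 0).2), z.2)).mp (h _ hrd)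
    · intro h y hy
      exact (ih y).mpr (h _ (umeet_rd P.G P.isPTEF.1 P.isPTEF.2 A hy))
  | ck A φ ih =>
    intro x
    constructor
    · intro h z hz
      rw [P.G.hRC] at hz
      have lift : ∀ z, ReflTransGen
          (fun u v => ∃ A' : Coalition Agt, A'.1 ⊆ A.1 ∧ P.G.RD A' u v)
          (gpt P.G (x.1.1 0, x.2)) z →
          ∃ y : (unrTES P).Point, (unrTES P).RC A x y ∧ gpt P.G (y.1.1 0, y.2) = z := by
        intro z hz
        induction hz with
        | refl => exact ⟨x, ReflTransGen.refl, rfl⟩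
        | @tail b c hub hbc ihl =>
          obtain ⟨y, hy, hgy⟩ := ihl
          obtain ⟨A', hsub, hstep⟩ := hbc
          have hstep' : ∀ a ∈ A'.1, UStep P.G a (y.1.1 0, y.2)
              (((y.1.1 0).1, (A', y.2, c) :: (y.1.1 0).2), c.2) :=
            fun a ha => ⟨A', c, ha, by rw [hgy]; exact hstep, rfl, rfl⟩
          have hrd : (unrTES P).RD A' y
              (uerun P ((y.1.1 0).1, (A', y.2, c) :: (y.1.1 0).2), c.2) :=
            fun a ha => EqvGen.rel _ _ (hstep' a ha)
          have hy' : ReflTransGen (fun u v => ∃ A' : Coalition Agt, A'.1 ⊆ A.1 ∧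
              (unrTES P).RD A' u v) x y := hy
          exact ⟨(uerun P ((y.1.1 0).1, (A', y.2, c) :: (y.1.1 0).2), c.2),
            ReflTransGen.tail hy' ⟨A', hsub, hrd⟩, rfl⟩
      obtain ⟨y, hy, hgy⟩ := lift z hz
      have := (ih y).mp (h y hy)
      rwa [hgy] at this
    · intro h y hy
      have hy' : ReflTransGen (fun u v => ∃ A' : Coalition Agt, A'.1 ⊆ A.1 ∧
          (unrTES P).RD A' u v) x y := hy
      clear hy
      have hdown : ReflTransGen
          (fun u v => ∃ A' : Coalition Agt, A'.1 ⊆ A.1 ∧ P.G.RD A' u v)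
          (gpt P.G (x.1.1 0, x.2)) (gpt P.G (y.1.1 0, y.2)) := by
        induction hy' with
        | refl => exact ReflTransGen.refl
        | @tail b c hub hbc ihl =>
          obtain ⟨A', hsub, hrd⟩ := hbc
          exact ReflTransGen.tail ihl
            ⟨A', hsub, umeet_rd P.G P.isPTEF.1 P.isPTEF.2 A' hrd⟩
      refine (ih y).mpr (h _ ?_)
      rw [P.G.hRC]
      exact hdown

/-! ### From a TEHS to a pseudo-model -/

/-- The TES underlying a TEHS, with the derived epistemic relations. -/
def hinTES (Hs : TEHS Agt AP) : TES Agt :=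
  { Hs.G with
    RD := derivedRD Hs.G
    RC := fun A => ReflTransGen fun x y =>
      ∃ A' : Coalition Agt, A'.1 ⊆ A.1 ∧ derivedRD Hs.G A' x y
    hRC := fun _ => rfl }

/-- The pseudo-model obtained from a TEHS. -/
def hinPTEM (Hs : TEHS Agt AP) : PseudoTEM Agt AP where
  G := hinTES Hs
  lab := derivedLab Hs
  isPTEF := by
    constructor
    · intro A
      exact Relation.EqvGen.is_equivalence _
    · intro A B hsub x y h
      exact Relation.EqvGen.mono (fun u v h' =>
        let ⟨C, hC, hr⟩ := h'; ⟨C, hsub.trans hC, hr⟩) _ _ h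

lemma hin_dk_persist (Hs : TEHS Agt AP) {A A' : Coalition Agt} (hsub : A'.1 ⊆ A.1)
    {x y : Hs.G.Point} (h : derivedRD Hs.G A x y) (φ : Formula Agt AP) :
    Formula.dk A' φ ∈ Hs.H x ↔ Formula.dk A' φ ∈ Hs.H y := by
  induction h with
  | rel u v huv =>
    obtain ⟨B, hB, hr⟩ := huv
    exact Hs.isH.2.2.2.2.2.1 u v B hr A' (hsub.trans hB) φ
  | refl u => exact Iff.rfl
  | symm u v _ ih => exact ih.symm
  | trans u v w _ _ ih1 ih2 => exact ih1.trans ih2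

/-- Truth lemma for the pseudo-model of a TEHS. -/
lemma hin_truth (Hs : TEHS Agt AP) (φ : Formula Agt AP) :
    ∀ x : (hinTES Hs).Point,
      (φ ∈ Hs.H x → (hinPTEM Hs).sat x φ) ∧
      (Formula.neg φ ∈ Hs.H x → ¬ (hinPTEM Hs).sat x φ) := by
  obtain ⟨hH1, hH2, hH3, hH4, hH5, hH6, hH7⟩ := Hs.isH
  induction φ with
  | atom p =>
    intro x
    exact ⟨fun h => h, fun h hs => hH1 x _ h hs⟩
  | neg φ ih =>
    intro x
    refine ⟨fun h => (ih x).2 h, fun h hs => ?_⟩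
    exact hs ((ih x).1 ((hH2 x).1 φ h))
  | and φ ψ ihφ ihψ =>
    intro x
    refine ⟨fun h => ?_, fun h hs => ?_⟩
    · obtain ⟨h1, h2⟩ := (hH2 x).2.1 φ ψ h
      exact ⟨(ihφ x).1 h1, (ihψ x).1 h2⟩
    · rcases (hH2 x).2.2.1 φ ψ h with h1 | h1
      · exact (ihφ x).2 h1 hs.1
      · exact (ihψ x).2 h1 hs.2
  | next φ ih =>
    intro x
    refine ⟨fun h => ?_, fun h hs => ?_⟩
    · exact (ih (x.1, x.2 + 1)).1 (hH3 x.1 x.2 φ h)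
    · have h1 : Formula.next (Formula.neg φ) ∈ Hs.H x := (hH2 x).2.2.2.1 φ h
      have h2 : Formula.neg φ ∈ Hs.H (x.1, x.2 + 1) := hH3 x.1 x.2 _ h1
      exact (ih (x.1, x.2 + 1)).2 h2 hs
  | untl φ ψ ihφ ihψ =>
    intro x
    refine ⟨fun h => ?_, fun h hs => ?_⟩
    · obtain ⟨i, hi, hψ, hφ⟩ := hH4 x.1 x.2 φ ψ h
      exact ⟨i, hi, (ihψ (x.1, i)).1 hψ, fun j h1 h2 => (ihφ (x.1, j)).1 (hφ j h1 h2)⟩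
    · have aux : ∀ d n, Formula.neg (Formula.untl φ ψ) ∈ Hs.H (x.1, n) →
          (hinPTEM Hs).sat (x.1, n + d) ψ →
          (∀ j, n ≤ j → j < n + d → (hinPTEM Hs).sat (x.1, j) φ) → False := by
        intro d
        induction d with
        | zero =>
          intro n hn hsψ hsφ
          rcases (hH2 (x.1, n)).2.2.2.2.2.1 φ ψ hn with ⟨h1, _⟩ | ⟨h1, _⟩ <;>
            exact (ihψ (x.1, n)).2 h1 hsψ
        | succ d ihd =>
          intro n hn hsψ hsφ
          rcases (hH2 (x.1, n)).2.2.2.2.2.1 φ ψ hn with ⟨h1, h2⟩ | ⟨h1, h2⟩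
          · exact (ihφ (x.1, n)).2 h2 (hsφ n le_rfl (by omega))
          · have h3 : Formula.next (Formula.neg (Formula.untl φ ψ)) ∈ Hs.H (x.1, n) :=
              (hH2 (x.1, n)).2.2.2.1 _ h2
            have h4 : Formula.neg (Formula.untl φ ψ) ∈ Hs.H (x.1, n + 1) :=
              hH3 x.1 n _ h3
            have he : n + 1 + d = n + (d + 1) := by omega
            refine ihd (n + 1) h4 ?_ ?_
            · rw [he]; exact hsψ
            · intro j hj1 hj2
              exact hsφ j (by omega) (by omega)
      obtain ⟨i, hi, hsψ, hsφ⟩ := hs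
      have he : x.2 + (i - x.2) = i := by omega
      refine aux (i - x.2) x.2 h ?_ ?_
      · rw [he]; exact hsψ
      · intro j h1 h2
        exact hsφ j h1 (by omega)
  | dk A φ ih =>
    intro x
    refine ⟨fun h y hy => ?_, fun h hs => ?_⟩
    · have hk : Formula.dk A φ ∈ Hs.H y := (hin_dk_persist Hs (subset_refl A.1) hy φ).1 h
      exact (ih y).1 ((hH2 y).2.2.2.2.2.2.2.1 A φ hk)
    · obtain ⟨y, hr, hnφ⟩ := hH5 x A φ h
      exact (ih y).2 hnφ (hs y (EqvGen.rel _ _ ⟨A, subset_refl A.1, hr⟩))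
  | ck A φ ih =>
    intro x
    refine ⟨fun h => ?_, fun h hs => ?_⟩
    · have inv : ∀ y, ReflTransGen (fun u v =>
          ∃ A' : Coalition Agt, A'.1 ⊆ A.1 ∧ derivedRD Hs.G A' u v) x y →
          φ ∈ Hs.H y ∧ Formula.ck A φ ∈ Hs.H y := by
        intro y hy
        induction hy with
        | refl =>
          obtain ⟨a₀, ha₀⟩ := A.2
          have hd := (hH2 x).2.2.2.2.2.2.2.2.1 A φ h a₀ ha₀
          have hand := (hH2 x).2.2.2.2.2.2.2.1 _ _ hd
          exact ⟨((hH2 x).2.1 _ _ hand).1, h⟩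
        | @tail b c hub hbc ihv =>
          obtain ⟨hφb, hckb⟩ := ihv
          obtain ⟨A', hsub, hd⟩ := hbc
          obtain ⟨a₀, ha₀⟩ := A'.2
          have h1 : Formula.dk (single a₀) (Formula.and φ (Formula.ck A φ)) ∈ Hs.H b :=
            (hH2 b).2.2.2.2.2.2.2.2.1 A φ hckb a₀ (hsub ha₀)
          have hsub' : (single a₀).1 ⊆ A'.1 := fun b hb => (mem_single_iff.mp hb) ▸ ha₀
          have h2 := (hin_dk_persist Hs hsub' hd _).1 h1
          have hand := (hH2 c).2.2.2.2.2.2.2.1 _ _ h2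
          exact ⟨((hH2 c).2.1 _ _ hand).1, ((hH2 c).2.1 _ _ hand).2⟩
      intro y hy
      exact (ih y).1 (inv y hy).1
    · obtain ⟨y, hrc, hnφ⟩ := hH7 x A φ h
      rw [Hs.G.hRC] at hrc
      have hrc' : ReflTransGen (fun u v =>
          ∃ A' : Coalition Agt, A'.1 ⊆ A.1 ∧ derivedRD Hs.G A' u v) x y :=
        ReflTransGen.mono (fun u v h' =>
          let ⟨A', h1, h2⟩ := h'; ⟨A', h1, EqvGen.rel _ _ ⟨A', subset_refl _, h2⟩⟩) _ _ hrc
      exact (ih y).2 hnφ (hs y hrc')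

end Statement12Aux

/-- `θ` is satisfiable in a TEM iff there is a TEHS in which `θ` is
satisfiable. -/
theorem statement_12 {Agt AP : Type} [Fintype Agt] [Nonempty Agt]
    (θ : Formula Agt AP) :
    (∃ (M : TEM Agt AP) (x : M.G.Point), M.sat x θ) ↔
    (∃ (Hs : TEHS Agt AP) (x : Hs.G.Point), θ ∈ Hs.H x) := by
  constructor
  · rintro ⟨M, x, hx⟩
    exact ⟨⟨M.G, fun y => {φ | M.sat y φ}, tem_truth_hintikka M⟩, x, hx⟩
  · rintro ⟨Hs, x, hx⟩
    have hsat : (hinPTEM Hs).sat x θ := (hin_truth Hs θ x).1 hx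
    refine ⟨unrTEM (hinPTEM Hs), (uerun (hinPTEM Hs) (x.1, []), x.2), ?_⟩
    exact (unr_truth (hinPTEM Hs) θ (uerun (hinPTEM Hs) (x.1, []), x.2)).mpr hsat

end CMATEL
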